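/- Let 0 < ε < 1, let m be an integer with m ≥ (12/ε)^{12/ε}, and let n ≥ 1 items be given. Suppose for each item j ∈ {1,…,n} the values v_{1j}, …, v_{mj} of the m bidders are i.i.d. nonnegative real random variables with a common MHR distribution F_j (the distributions F_j may differ across items). Then there exist reserve prices r_1, …, r_n ≥ 0 such that ∑_{j=1}^n Pr[ max_i v_{ij} ≥ r_j ] · r_j ≥ (1−ε) · ∑_{j=1}^n E[ max_i v_{ij} ]. -/

import Mathlib

open MeasureTheory ProbabilityTheory Finset

noncomputable def Gf (D : Measure ℝ) (x : ℝ) : ℝ := (D (Set.Ioi x)).toReal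
noncomputable def psi (D : Measure ℝ) (f : ℝ → ℝ) (x : ℝ) : ℝ := max (f x / Gf D x) 0

variable {D : Measure ℝ} {f : ℝ → ℝ}

lemma Gf_antitone' [IsFiniteMeasure D] : True := trivial

lemma Gf_antitone [IsFiniteMeasure D] : Antitone (Gf D) := fun x y hxy =>
  ENNReal.toReal_mono (measure_ne_top D _) (measure_mono (Set.Ioi_subset_Ioi hxy))

lemma Gf_nonneg (x : ℝ) : 0 ≤ Gf D x := ENNReal.toReal_nonneg

lemma Gf_le_one [IsProbabilityMeasure D] (x : ℝ) : Gf D x ≤ 1 := by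
  unfold Gf
  rw [show (1:ℝ) = (D Set.univ).toReal by simp]
  exact ENNReal.toReal_mono (measure_ne_top D _) (measure_mono (Set.subset_univ _))

lemma Gf_sub [IsProbabilityMeasure D] {x y : ℝ} (hxy : x ≤ y) :
    Gf D x - Gf D y = (D (Set.Ioc x y)).toReal := by
  have h : Set.Ioi x = Set.Ioc x y ∪ Set.Ioi y := (Set.Ioc_union_Ioi_eq_Ioi hxy).symm
  have hd : Disjoint (Set.Ioc x y) (Set.Ioi y) := by
    apply Set.disjoint_left.2
    intro a ha hb
    exact absurd ha.2 (not_le.2 hb)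
  unfold Gf
  rw [h, measure_union hd measurableSet_Ioi,
    ENNReal.toReal_add (measure_ne_top D _) (measure_ne_top D _)]
  ring

lemma Ff_eq [IsProbabilityMeasure D] (x : ℝ) : (D (Set.Iic x)).toReal = 1 - Gf D x := by
  have h : (1:ℝ) = (D Set.univ).toReal := by simp
  have hu : Set.Iic x ∪ Set.Ioi x = Set.univ := Set.Iic_union_Ioi
  have hd : Disjoint (Set.Iic x) (Set.Ioi x) := by
    apply Set.disjoint_left.2
    intro a ha hb
    exact absurd (show a ≤ x from ha) (not_le.2 hb)
  rw [h, ← hu, measure_union hd measurableSet_Ioi,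
    ENNReal.toReal_add (measure_ne_top D _) (measure_ne_top D _)]
  unfold Gf; ring

section withf
variable (hpdf : D = MeasureTheory.volume.withDensity fun x => ENNReal.ofReal (f x))

include hpdf

lemma D_singleton (x : ℝ) : D {x} = 0 := by
  rw [hpdf, withDensity_apply _ (measurableSet_singleton x)]
  rw [Measure.restrict_eq_zero.2 (by simp)]
  simp

lemma D_Iio_eq (x : ℝ) : D (Set.Iio x) = D (Set.Iic x) := by
  have h : Set.Iic x = Set.Iio x ∪ {x} := by
    ext a; simp [le_iff_lt_or_eq]
  refine le_antisymm (measure_mono Set.Iio_subset_Iic_self) ?_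
  calc D (Set.Iic x) ≤ D (Set.Iio x) + D {x} := h ▸ measure_union_le _ _
  _ = D (Set.Iio x) := by rw [D_singleton hpdf x, add_zero]

lemma D_Ioc_eq (x y : ℝ) : D (Set.Ioc x y) = ∫⁻ u in Set.Ioc x y, ENNReal.ofReal (f u) := by
  rw [hpdf, withDensity_apply _ measurableSet_Ioc]

end withf

lemma psi_nonneg (x : ℝ) : 0 ≤ psi D f x := le_max_right _ _

section steps
variable [IsProbabilityMeasure D]
variable (hpdf : D = MeasureTheory.volume.withDensity fun x => ENNReal.ofReal (f x))
variable (hmono : MonotoneOn (fun x => f x / Gf D x) {x | 0 < Gf D x})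

lemma psi_mono (hmono : MonotoneOn (fun x => f x / Gf D x) {x | 0 < Gf D x}) :
    MonotoneOn (psi D f) {x | 0 < Gf D x} :=
  fun a ha b hb hab => max_le_max (hmono ha hb hab) le_rfl

include hpdf

lemma step2 {x y : ℝ} (hxy : x ≤ y) (hGy : 0 < Gf D y)
    (hmono : MonotoneOn (fun x => f x / Gf D x) {x | 0 < Gf D x}) :
    Gf D x - Gf D y ≤ psi D f y * Gf D x * (y - x) := by
  rw [Gf_sub hxy]
  have hb : ∀ u ∈ Set.Ioc x y, ENNReal.ofReal (f u) ≤ ENNReal.ofReal (psi D f y * Gf D x) := by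
    intro u hu
    apply ENNReal.ofReal_le_ofReal
    have hGu : 0 < Gf D u := lt_of_lt_of_le hGy (Gf_antitone hu.2)
    rcases le_or_gt (f u) 0 with h | h
    · exact h.trans (mul_nonneg (psi_nonneg _) (Gf_nonneg _))
    · have h1 : f u / Gf D u ≤ psi D f y :=
        le_trans (hmono hGu hGy hu.2) (le_max_left _ _)
      have h2 : f u = (f u / Gf D u) * Gf D u := by field_simp
      rw [h2]
      exact mul_le_mul h1 (Gf_antitone hu.1.le) (Gf_nonneg _) (psi_nonneg _)
  have := setLIntegral_mono' (μ := MeasureTheory.volume) measurableSet_Ioc hb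
  rw [← D_Ioc_eq hpdf] at this
  rw [setLIntegral_const] at this
  have hle : D (Set.Ioc x y) ≤ ENNReal.ofReal (psi D f y * Gf D x * (y - x)) := by
    refine this.trans ?_
    rw [Real.volume_Ioc, ← ENNReal.ofReal_mul (mul_nonneg (psi_nonneg _) (Gf_nonneg _))]
  exact ENNReal.toReal_le_of_le_ofReal
    (mul_nonneg (mul_nonneg (psi_nonneg _) (Gf_nonneg _)) (by linarith)) hle

lemma step1 {x y : ℝ} (hxy : x ≤ y) (hGy : 0 < Gf D y)
    (hmono : MonotoneOn (fun x => f x / Gf D x) {x | 0 < Gf D x}) :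
    psi D f x * Gf D y * (y - x) ≤ Gf D x - Gf D y := by
  rw [Gf_sub hxy]
  have hGx : 0 < Gf D x := lt_of_lt_of_le hGy (Gf_antitone hxy)
  have hb : ∀ u ∈ Set.Ioc x y, ENNReal.ofReal (psi D f x * Gf D y) ≤ ENNReal.ofReal (f u) := by
    intro u hu
    rcases eq_or_lt_of_le (psi_nonneg (D := D) (f := f) x) with h | h
    · rw [← h, zero_mul, ENNReal.ofReal_zero]
      exact zero_le
    · apply ENNReal.ofReal_le_ofReal
      have hGu : 0 < Gf D u := lt_of_lt_of_le hGy (Gf_antitone hu.2)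
      have hpx : psi D f x = f x / Gf D x := by
        rcases max_cases (f x / Gf D x) (0:ℝ) with ⟨h1, _⟩ | ⟨h1, _⟩
        · exact h1
        · unfold psi at h; rw [h1] at h; exact absurd h (lt_irrefl 0)
      have h2 : f x / Gf D x ≤ f u / Gf D u := hmono hGx hGu hu.1.le
      have h3 : f u = (f u / Gf D u) * Gf D u := by field_simp
      rw [h3, hpx]
      exact mul_le_mul h2 (Gf_antitone hu.2) (Gf_nonneg _) (le_trans (hpx ▸ h.le) h2)
  have := setLIntegral_mono' (μ := MeasureTheory.volume) measurableSet_Ioc hb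
  rw [← D_Ioc_eq hpdf, setLIntegral_const] at this
  rw [Real.volume_Ioc, ← ENNReal.ofReal_mul (mul_nonneg (psi_nonneg _) (Gf_nonneg _))] at this
  rcases le_or_gt (y - x) 0 with h | h
  · have : psi D f x * Gf D y * (y - x) ≤ 0 :=
      mul_nonpos_of_nonneg_of_nonpos (mul_nonneg (psi_nonneg _) (Gf_nonneg _)) h
    exact this.trans ENNReal.toReal_nonneg
  · exact (ENNReal.ofReal_le_iff_le_toReal (measure_ne_top D _)).1 this

end steps

section chains
variable [IsProbabilityMeasure D]
variable (hpdf : D = MeasureTheory.volume.withDensity fun x => ENNReal.ofReal (f x))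
variable (hmono : MonotoneOn (fun x => f x / Gf D x) {x | 0 < Gf D x})
include hpdf hmono

lemma chainA {a b : ℝ} (hab : a ≤ b) (hGb : 0 < Gf D b) {N : ℕ} (hN : 1 ≤ N)
    (hsmall : psi D f b * ((b - a) / N) ≤ 1) :
    Gf D a * (1 - psi D f b * ((b - a) / N)) ^ N ≤ Gf D b := by
  set Δ := (b - a) / N with hΔ
  set c := psi D f b with hc
  have hNpos : (0:ℝ) < N := by exact_mod_cast hN
  have hΔ0 : 0 ≤ Δ := div_nonneg (by linarith) hNpos.le
  have hfac : 0 ≤ 1 - c * Δ := by linarith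
  have key : ∀ k : ℕ, k ≤ N → Gf D a * (1 - c * Δ) ^ k ≤ Gf D (a + k * Δ) := by
    intro k hk
    induction k with
    | zero => simp
    | succ k ih =>
      have hk' : k ≤ N := Nat.le_of_succ_le hk
      have ihk := ih hk'
      have hyb : a + (k + 1 : ℕ) * Δ ≤ b := by
        have hkN : ((k:ℝ) + 1) ≤ N := by exact_mod_cast hk
        have h1 : ((k:ℝ) + 1) * Δ ≤ (N:ℝ) * Δ := mul_le_mul_of_nonneg_right hkN hΔ0
        have h2 : (N:ℝ) * Δ = b - a := by rw [hΔ]; field_simp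
        push_cast
        linarith
      have hxy : a + k * Δ ≤ a + (k + 1 : ℕ) * Δ := by
        push_cast; nlinarith
      have hGy : 0 < Gf D (a + (k + 1 : ℕ) * Δ) := lt_of_lt_of_le hGb (Gf_antitone hyb)
      have hs2 := step2 hpdf hxy hGy hmono
      have hpsile : psi D f (a + (k + 1 : ℕ) * Δ) ≤ c :=
        psi_mono hmono hGy hGb hyb
      have hGx : 0 ≤ Gf D (a + k * Δ) := Gf_nonneg _
      have hdiff : (a + (k + 1 : ℕ) * Δ) - (a + k * Δ) = Δ := by push_cast; ring
      rw [hdiff] at hs2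
      have : Gf D (a + k * Δ) * (1 - c * Δ) ≤ Gf D (a + (k + 1 : ℕ) * Δ) := by
        nlinarith [mul_le_mul_of_nonneg_right (mul_le_mul_of_nonneg_right hpsile hGx) hΔ0]
      calc Gf D a * (1 - c * Δ) ^ (k + 1) = (Gf D a * (1 - c * Δ) ^ k) * (1 - c * Δ) := by ring
      _ ≤ Gf D (a + k * Δ) * (1 - c * Δ) := mul_le_mul_of_nonneg_right ihk hfac
      _ ≤ _ := this
  have := key N le_rfl
  rwa [show a + (N : ℝ) * Δ = b by rw [hΔ]; field_simp; ring] at this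

lemma chainB {a b : ℝ} (hab : a ≤ b) (hGb : 0 < Gf D b) {N : ℕ} (hN : 1 ≤ N) :
    Gf D b * (1 + psi D f a * ((b - a) / N)) ^ N ≤ Gf D a := by
  set Δ := (b - a) / N with hΔ
  set c := psi D f a with hc
  have hNpos : (0:ℝ) < N := by exact_mod_cast hN
  have hΔ0 : 0 ≤ Δ := div_nonneg (by linarith) hNpos.le
  have hc0 : 0 ≤ c := psi_nonneg _
  have hfac : 0 ≤ 1 + c * Δ := by nlinarith
  have key : ∀ k : ℕ, k ≤ N → Gf D (a + k * Δ) * (1 + c * Δ) ^ k ≤ Gf D a := by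
    intro k hk
    induction k with
    | zero => simp
    | succ k ih =>
      have hk' : k ≤ N := Nat.le_of_succ_le hk
      have ihk := ih hk'
      have hyb : a + (k + 1 : ℕ) * Δ ≤ b := by
        have hkN : ((k:ℝ) + 1) ≤ N := by exact_mod_cast hk
        have h1 : ((k:ℝ) + 1) * Δ ≤ (N:ℝ) * Δ := mul_le_mul_of_nonneg_right hkN hΔ0
        have h2 : (N:ℝ) * Δ = b - a := by rw [hΔ]; field_simp
        push_cast
        linarith
      have hxy : a + k * Δ ≤ a + (k + 1 : ℕ) * Δ := by push_cast; nlinarith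
      have hax : a ≤ a + k * Δ := by
        have : (0:ℝ) ≤ k := Nat.cast_nonneg k
        nlinarith
      have hGy : 0 < Gf D (a + (k + 1 : ℕ) * Δ) := lt_of_lt_of_le hGb (Gf_antitone hyb)
      have hGx : 0 < Gf D (a + k * Δ) :=
        lt_of_lt_of_le hGb (Gf_antitone (hxy.trans hyb))
      have hs1 := step1 hpdf hxy hGy hmono
      have hpsige : c ≤ psi D f (a + k * Δ) := psi_mono hmono (lt_of_lt_of_le hGb (Gf_antitone hab)) hGx hax
      have hdiff : (a + (k + 1 : ℕ) * Δ) - (a + k * Δ) = Δ := by push_cast; ring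
      rw [hdiff] at hs1
      have hGy0 : 0 ≤ Gf D (a + (k + 1 : ℕ) * Δ) := hGy.le
      have hstep : Gf D (a + (k + 1 : ℕ) * Δ) * (1 + c * Δ) ≤ Gf D (a + k * Δ) := by
        nlinarith [mul_le_mul_of_nonneg_right (mul_le_mul_of_nonneg_right hpsige hGy0) hΔ0]
      calc Gf D (a + (k + 1 : ℕ) * Δ) * (1 + c * Δ) ^ (k + 1)
          = (Gf D (a + (k + 1 : ℕ) * Δ) * (1 + c * Δ)) * (1 + c * Δ) ^ k := by ring
      _ ≤ Gf D (a + k * Δ) * (1 + c * Δ) ^ k := mul_le_mul_of_nonneg_right hstep (pow_nonneg hfac k)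
      _ ≤ Gf D a := ihk
  have := key N le_rfl
  rwa [show a + (N : ℝ) * Δ = b by rw [hΔ]; field_simp; ring] at this

lemma expA {a b : ℝ} (hab : a ≤ b) (hGb : 0 < Gf D b) :
    Gf D a * Real.exp (-(psi D f b * (b - a))) ≤ Gf D b := by
  set z := psi D f b * (b - a) with hz
  have hz0 : 0 ≤ z := mul_nonneg (psi_nonneg _) (by linarith)
  have ht : Filter.Tendsto (fun N : ℕ => Gf D a * (1 + -z / N) ^ N) Filter.atTop
      (nhds (Gf D a * Real.exp (-z))) :=
    (Real.tendsto_one_add_div_pow_exp (-z)).const_mul _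
  refine le_of_tendsto ht ?_
  filter_upwards [Filter.eventually_ge_atTop (max 1 ⌈z⌉₊)] with N hN
  have hN1 : 1 ≤ N := le_trans (le_max_left _ _) hN
  have hNpos : (0:ℝ) < N := by exact_mod_cast hN1
  have hNz : z ≤ N := by
    calc z ≤ (⌈z⌉₊ : ℝ) := Nat.le_ceil z
    _ ≤ N := by exact_mod_cast le_trans (le_max_right _ _) hN
  have hsmall : psi D f b * ((b - a) / N) ≤ 1 := by
    rw [← mul_div_assoc, ← hz]
    rw [div_le_one hNpos]
    exact hNz
  have := chainA hpdf hmono hab hGb hN1 hsmall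
  have heq : (1 : ℝ) + -z / N = 1 - psi D f b * ((b - a) / N) := by
    rw [← mul_div_assoc, ← hz]; ring
  rw [heq]
  exact this

lemma expB {a b : ℝ} (hab : a ≤ b) (hGb : 0 < Gf D b) :
    Gf D b * Real.exp (psi D f a * (b - a)) ≤ Gf D a := by
  set z := psi D f a * (b - a) with hz
  have ht : Filter.Tendsto (fun N : ℕ => Gf D b * (1 + z / N) ^ N) Filter.atTop
      (nhds (Gf D b * Real.exp z)) :=
    (Real.tendsto_one_add_div_pow_exp z).const_mul _
  refine le_of_tendsto ht ?_
  filter_upwards [Filter.eventually_ge_atTop 1] with N hN1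
  have := chainB hpdf hmono hab hGb hN1
  have heq : (1 : ℝ) + z / N = 1 + psi D f a * ((b - a) / N) := by
    rw [← mul_div_assoc, ← hz]
  rw [heq]
  exact this

end chains

section quantile
variable [IsProbabilityMeasure D]
variable (hpdf : D = MeasureTheory.volume.withDensity fun x => ENNReal.ofReal (f x))
variable (h0 : D (Set.Iio 0) = 0)
include hpdf h0

lemma Gf_zero : Gf D 0 = 1 := by
  have h1 : (D (Set.Iic 0)).toReal = 1 - Gf D 0 := Ff_eq 0
  rw [← D_Iio_eq hpdf, h0] at h1
  simp at h1
  linarith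

lemma Gf_tendsto_zero : ∀ c : ℝ, 0 < c → ∃ x : ℝ, Gf D x ≤ c := by
  intro c hc
  have hseq : Filter.Tendsto (fun n : ℕ => D (Set.Ioi (n : ℝ))) Filter.atTop (nhds (D (⋂ n : ℕ, Set.Ioi (n : ℝ)))) := by
    apply tendsto_measure_iInter_atTop
    · exact fun n => (measurableSet_Ioi).nullMeasurableSet
    · intro a b hab
      exact Set.Ioi_subset_Ioi (by exact_mod_cast hab)
    · exact ⟨0, measure_ne_top D _⟩
  have hempty : (⋂ n : ℕ, Set.Ioi (n : ℝ)) = ∅ := by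
    ext x
    simp only [Set.mem_iInter, Set.mem_Ioi, Set.mem_empty_iff_false, iff_false, not_forall, not_lt]
    obtain ⟨n, hn⟩ := exists_nat_gt x
    exact ⟨n, hn.le⟩
  rw [hempty, measure_empty] at hseq
  have := (ENNReal.tendsto_toReal (by simp : (0:ENNReal) ≠ ⊤)).comp hseq
  simp only [ENNReal.toReal_zero] at this
  obtain ⟨n, hn⟩ := (this.eventually_le_const hc).exists
  exact ⟨n, hn⟩

end quantile

section quantile2
variable [IsProbabilityMeasure D]
variable (hpdf : D = MeasureTheory.volume.withDensity fun x => ENNReal.ofReal (f x))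
variable (h0 : D (Set.Iio 0) = 0)
include hpdf h0

lemma quantile_exists {c : ℝ} (hc0 : 0 < c) (hc1 : c < 1) :
    ∃ t : ℝ, 0 < t ∧ Gf D t = c ∧ ∀ x < t, c < Gf D x := by
  set T := {x : ℝ | Gf D x ≤ c} with hT
  have hne : T.Nonempty := by
    obtain ⟨x, hx⟩ := Gf_tendsto_zero hpdf h0 c hc0
    exact ⟨x, hx⟩
  have hG0 : Gf D 0 = 1 := Gf_zero hpdf h0
  have hbdd : BddBelow T := by
    refine ⟨0, fun x hx => ?_⟩
    by_contra h
    push_neg at h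
    have : Gf D 0 ≤ Gf D x := Gf_antitone h.le
    rw [hG0] at this
    exact absurd (le_trans this hx) (not_le.2 hc1)
  set t := sInf T with ht
  have hnotinT : ∀ x < t, c < Gf D x := by
    intro x hx
    by_contra h
    push_neg at h
    exact absurd (csInf_le hbdd h) (not_le.2 hx)
  -- upper bound: Gf D t ≤ c
  have hub : Gf D t ≤ c := by
    have hseq : Filter.Tendsto (fun n : ℕ => D (Set.Ioi (t + 1 / (n + 1)))) Filter.atTop
        (nhds (D (⋃ n : ℕ, Set.Ioi (t + 1 / (n + 1))))) := by
      apply tendsto_measure_iUnion_atTop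
      intro a b hab
      apply Set.Ioi_subset_Ioi
      have : (1:ℝ) / (b + 1) ≤ 1 / (a + 1) := by
        apply one_div_le_one_div_of_le
        · positivity
        · exact_mod_cast Nat.add_le_add_right hab 1
      linarith
    have hun : (⋃ n : ℕ, Set.Ioi (t + 1 / ((n : ℝ) + 1))) = Set.Ioi t := by
      ext x
      simp only [Set.mem_iUnion, Set.mem_Ioi]
      constructor
      · rintro ⟨n, hn⟩
        have : (0:ℝ) < 1 / ((n:ℝ) + 1) := by positivity
        linarith
      · intro hx
        obtain ⟨n, hn⟩ := exists_nat_one_div_lt (by linarith : 0 < x - t)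
        exact ⟨n, by linarith⟩
    rw [hun] at hseq
    have htr := (ENNReal.tendsto_toReal (measure_ne_top D _)).comp hseq
    refine le_of_tendsto htr ?_
    filter_upwards with n
    have hpos : (0:ℝ) < 1 / ((n:ℝ) + 1) := by positivity
    obtain ⟨x, hxT, hxlt⟩ : ∃ x ∈ T, x < t + 1 / ((n:ℝ) + 1) := by
      apply (csInf_lt_iff hbdd hne).1
      rw [← ht]; linarith
    calc (D (Set.Ioi (t + 1 / ((n:ℝ) + 1)))).toReal = Gf D (t + 1 / ((n:ℝ)+1)) := rfl
    _ ≤ Gf D x := Gf_antitone hxlt.le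
    _ ≤ c := hxT
  -- lower bound: c ≤ Gf D t
  have hlb : c ≤ Gf D t := by
    have hseq : Filter.Tendsto (fun n : ℕ => D (Set.Ioi (t - 1 / (n + 1)))) Filter.atTop
        (nhds (D (⋂ n : ℕ, Set.Ioi (t - 1 / (n + 1))))) := by
      apply tendsto_measure_iInter_atTop
      · exact fun n => measurableSet_Ioi.nullMeasurableSet
      · intro a b hab
        apply Set.Ioi_subset_Ioi
        have : (1:ℝ) / (b + 1) ≤ 1 / (a + 1) := by
          apply one_div_le_one_div_of_le
          · positivity
          · exact_mod_cast Nat.add_le_add_right hab 1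
        linarith
      · exact ⟨0, measure_ne_top D _⟩
    have hin : (⋂ n : ℕ, Set.Ioi (t - 1 / ((n : ℝ) + 1))) = Set.Ici t := by
      ext x
      simp only [Set.mem_iInter, Set.mem_Ioi, Set.mem_Ici]
      constructor
      · intro h
        by_contra hx
        push_neg at hx
        obtain ⟨n, hn⟩ := exists_nat_one_div_lt (by linarith : 0 < t - x)
        have := h n
        linarith
      · intro hx n
        have hpos : (0:ℝ) < 1 / ((n:ℝ) + 1) := by positivity
        linarith
    rw [hin] at hseq
    have hIci : D (Set.Ici t) = D (Set.Ioi t) := by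
      have hu : Set.Ici t = {t} ∪ Set.Ioi t := by
        ext a; simp [le_iff_lt_or_eq, eq_comm, or_comm]
      rw [hu]
      refine le_antisymm ?_ (measure_mono Set.subset_union_right)
      calc D ({t} ∪ Set.Ioi t) ≤ D {t} + D (Set.Ioi t) := measure_union_le _ _
        _ = D (Set.Ioi t) := by rw [D_singleton hpdf t, zero_add]
    rw [hIci] at hseq
    have htr := (ENNReal.tendsto_toReal (measure_ne_top D _)).comp hseq
    refine ge_of_tendsto htr ?_
    filter_upwards with n
    have hpos : (0:ℝ) < 1 / ((n:ℝ) + 1) := by positivity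
    exact (hnotinT (t - 1/((n:ℝ)+1)) (by linarith)).le
  have hGt : Gf D t = c := le_antisymm hub hlb
  refine ⟨t, ?_, hGt, hnotinT⟩
  by_contra h
  push_neg at h
  have : Gf D 0 ≤ Gf D t := Gf_antitone h
  rw [hG0, hGt] at this
  linarith

end quantile2

section core
variable [IsProbabilityMeasure D]
variable (hpdf : D = MeasureTheory.volume.withDensity fun x => ENNReal.ofReal (f x))
variable (h0 : D (Set.Iio 0) = 0)
variable (hmono : MonotoneOn (fun x => f x / Gf D x) {x | 0 < Gf D x})
include hpdf h0 hmono

lemma dist_core {m : ℕ} (hm2 : 2 ≤ m) {δ : ℝ} (hδ0 : 0 < δ) (hδ1 : δ < 1) :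
    ∃ t : ℝ, 0 < t ∧ Gf D t = 1 / m ∧
      (∀ y, t ≤ y → Gf D y ≤ (1 / m) * Real.exp (-(Real.log m / t) * (y - t))) ∧
      ((m : ℝ) ^ (δ - 1 : ℝ) ≤ Gf D ((1 - δ) * t)) := by
  have hm0 : (0:ℝ) < m := by positivity
  have hm1 : (1:ℝ) < m := by exact_mod_cast Nat.lt_of_lt_of_le Nat.one_lt_two hm2
  have hc0 : (0:ℝ) < 1 / m := by positivity
  have hc1 : (1:ℝ) / m < 1 := by rw [div_lt_one hm0]; exact hm1
  have hlogm : 0 < Real.log m := Real.log_pos hm1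
  obtain ⟨t, ht0, hGt, hlt⟩ := quantile_exists hpdf h0 hc0 hc1
  have hGtpos : 0 < Gf D t := hGt ▸ hc0
  have hG0 : Gf D 0 = 1 := Gf_zero hpdf h0
  -- hazard at t is at least log m / t
  have hψt : Real.log m / t ≤ psi D f t := by
    have h1 := expA hpdf hmono ht0.le hGtpos
    rw [hG0, one_mul, sub_zero, hGt] at h1
    have h2 : Real.exp (-(psi D f t * t)) ≤ Real.exp (Real.log (1/m)) := by
      rwa [Real.exp_log hc0]
    have h3 : -(psi D f t * t) ≤ Real.log (1/m) := Real.exp_le_exp.1 h2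
    rw [one_div, Real.log_inv] at h3
    rw [div_le_iff₀ ht0]
    linarith
  refine ⟨t, ht0, hGt, ?_, ?_⟩
  · -- tail bound
    intro y hy
    rcases eq_or_lt_of_le (Gf_nonneg (D := D) y) with hGy | hGy
    · rw [← hGy]; positivity
    · have h1 := expB hpdf hmono hy hGy
      rw [hGt] at h1
      have h2 : Gf D y ≤ (1/m) * Real.exp (-(psi D f t * (y - t))) := by
        rw [Real.exp_neg, ← div_eq_mul_inv]
        exact (le_div_iff₀ (Real.exp_pos _)).2 h1
      refine h2.trans ?_
      apply mul_le_mul_of_nonneg_left _ hc0.le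
      apply Real.exp_le_exp.2
      have : Real.log m / t * (y - t) ≤ psi D f t * (y - t) :=
        mul_le_mul_of_nonneg_right hψt (by linarith)
      linarith
  · -- lower bound at s = (1-δ)t
    set s := (1 - δ) * t with hs
    have hst : s < t := by nlinarith
    have hs0 : 0 ≤ s := by nlinarith
    have hGs : 1 / m < Gf D s := hlt s hst
    have hGspos : 0 < Gf D s := hc0.trans hGs
    set h := psi D f s with hh
    have hstar : Real.exp (-(h * s)) ≤ Gf D s := by
      have h1 := expA hpdf hmono hs0 hGspos
      rwa [hG0, one_mul, sub_zero] at h1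
    have hstar2 : (1 / m) * Real.exp (h * (t - s)) ≤ Gf D s := by
      -- limit over x ↑ t
      have hxseq : ∀ n : ℕ, (1 / (m:ℝ)) * Real.exp (h * ((t - (t - s)/(n+2)) - s)) ≤ Gf D s := by
        intro n
        have hpos : (0:ℝ) < (t - s) / (n + 2) := div_pos (by linarith) (by positivity)
        have hlt2 : (t - s) / (n + 2) < t - s := by
          rw [div_lt_iff₀ (by positivity : (0:ℝ) < (n:ℝ) + 2)]
          nlinarith
        set x := t - (t - s)/(n+2) with hx
        have hsx : s ≤ x := by rw [hx]; linarith
        have hxt : x < t := by rw [hx]; linarith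
        have hGx : 1 / m < Gf D x := hlt x hxt
        have h1 := expB hpdf hmono hsx (hc0.trans hGx)
        calc (1 / (m:ℝ)) * Real.exp (h * (x - s)) ≤ Gf D x * Real.exp (h * (x - s)) := by
              apply mul_le_mul_of_nonneg_right hGx.le (Real.exp_pos _).le
        _ = Gf D x * Real.exp (psi D f s * (x - s)) := by rw [hh]
        _ ≤ Gf D s := h1
      have htend : Filter.Tendsto (fun n : ℕ => (1 / (m:ℝ)) * Real.exp (h * ((t - (t - s)/(n+2)) - s)))
          Filter.atTop (nhds ((1 / (m:ℝ)) * Real.exp (h * (t - s)))) := by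
        have h1 : Filter.Tendsto (fun n : ℕ => (t - s) / ((n:ℝ)+2)) Filter.atTop (nhds 0) := by
          apply Filter.Tendsto.div_atTop tendsto_const_nhds
          apply Filter.tendsto_atTop_add_const_right
          exact tendsto_natCast_atTop_atTop
        have h2 : Filter.Tendsto (fun n : ℕ => h * ((t - (t - s)/(n+2)) - s)) Filter.atTop
            (nhds (h * (t - s))) := by
          have := (tendsto_const_nhds (x := t) (f := Filter.atTop (α := ℕ))).sub h1
          have h3 := (this.sub (tendsto_const_nhds (x := s)))
          simpa using h3.const_mul h
        exact ((Real.continuous_exp.tendsto _).comp h2).const_mul _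
      exact le_of_tendsto htend (Filter.Eventually.of_forall hxseq)
    have hrpow : (m:ℝ) ^ (δ - 1 : ℝ) = Real.exp ((δ - 1) * Real.log m) := by
      rw [Real.rpow_def_of_pos hm0, mul_comm]
    rcases le_or_gt h (Real.log m / t) with hcase | hcase
    · refine le_trans ?_ hstar
      rw [hrpow]
      apply Real.exp_le_exp.2
      have h1 : h * s ≤ (Real.log m / t) * ((1 - δ) * t) := by
        apply mul_le_mul hcase le_rfl hs0 (by positivity)
      have h2 : (Real.log m / t) * ((1 - δ) * t) = (1 - δ) * Real.log m := by
        field_simp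
      linarith
    · refine le_trans ?_ hstar2
      rw [hrpow]
      have h1 : (1:ℝ)/m = Real.exp (-Real.log m) := by
        rw [Real.exp_neg, Real.exp_log hm0, one_div]
      rw [h1, ← Real.exp_add]
      apply Real.exp_le_exp.2
      have h2 : t - s = δ * t := by rw [hs]; ring
      rw [h2]
      have h3 : (Real.log m / t) * (δ * t) ≤ h * (δ * t) := by
        apply mul_le_mul_of_nonneg_right hcase.le (by positivity)
      have h4 : (Real.log m / t) * (δ * t) = δ * Real.log m := by field_simp
      nlinarith

end core

lemma numeric_facts {ε : ℝ} (hε0 : 0 < ε) (hε1 : ε < 1) {m : ℕ}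
    (hm : (12 / ε) ^ (12 / ε) ≤ (m : ℝ)) :
    2 ≤ m ∧ 12 / ε ≤ Real.log m ∧ Real.exp (-((m:ℝ) ^ (ε/3 : ℝ))) ≤ ε/3 := by
  set b := 12 / ε with hb
  have hb12 : (12:ℝ) ≤ b := by
    rw [hb, le_div_iff₀ hε0]; nlinarith
  have hb1 : (1:ℝ) < b := by linarith
  have hbpos : (0:ℝ) < b := by linarith
  have hblog : 1 < Real.log b := by
    rw [Real.lt_log_iff_exp_lt hbpos]
    calc Real.exp 1 < 2.7182818286 := Real.exp_one_lt_d9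
    _ ≤ b := by linarith
  have hbb : b ≤ b ^ (b : ℝ) := by
    calc b = b ^ (1:ℝ) := (Real.rpow_one b).symm
    _ ≤ b ^ (b:ℝ) := Real.rpow_le_rpow_of_exponent_le hb1.le (by linarith)
  have hm12 : (12:ℝ) ≤ m := le_trans hb12 (le_trans hbb hm)
  have hm2 : 2 ≤ m := by exact_mod_cast le_trans (by norm_num : (2:ℝ) ≤ 12) hm12
  have hmpos : (0:ℝ) < m := by linarith
  have hlog : b * Real.log b ≤ Real.log m := by
    calc b * Real.log b = Real.log (b ^ (b:ℝ)) := (Real.log_rpow hbpos b).symm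
    _ ≤ Real.log m := Real.log_le_log (Real.rpow_pos_of_pos hbpos b) hm
  have hlogb : b ≤ Real.log m := by nlinarith
  refine ⟨hm2, hlogb, ?_⟩
  have hδ : (0:ℝ) < ε/3 := by linarith
  have hrpow : (m:ℝ) ^ (ε/3 : ℝ) = Real.exp ((ε/3) * Real.log m) := by
    rw [Real.rpow_def_of_pos hmpos, mul_comm]
  have h4 : 4 * Real.log b ≤ (ε/3) * Real.log m := by
    have : (ε/3) * (b * Real.log b) ≤ (ε/3) * Real.log m :=
      mul_le_mul_of_nonneg_left hlog hδ.le
    have hbeq : (ε/3) * b = 4 := by rw [hb]; field_simp; ring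
    nlinarith
  have hkey : Real.log (3/ε) ≤ (m:ℝ) ^ (ε/3 : ℝ) := by
    have h1 : Real.log (3/ε) ≤ 3/ε := by
      have := Real.log_le_sub_one_of_pos (by positivity : (0:ℝ) < 3/ε)
      linarith
    have h2 : (3:ℝ)/ε ≤ b := by
      rw [hb, div_le_div_iff₀ hε0 hε0]
      nlinarith
    have h3 : b = Real.exp (Real.log b) := (Real.exp_log hbpos).symm
    have h4' : Real.exp (Real.log b) ≤ Real.exp ((ε/3) * Real.log m) := by
      apply Real.exp_le_exp.2
      nlinarith
    rw [hrpow]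
    linarith [h3 ▸ h4']
  have hfin : -(m:ℝ) ^ (ε/3 : ℝ) ≤ Real.log (ε/3) := by
    have : Real.log (ε/3) = -Real.log (3/ε) := by
      rw [show ε/3 = (3/ε)⁻¹ by field_simp, Real.log_inv]
    linarith
  calc Real.exp (-((m:ℝ) ^ (ε/3 : ℝ))) ≤ Real.exp (Real.log (ε/3)) := Real.exp_le_exp.2 hfin
  _ = ε/3 := Real.exp_log (by positivity)

lemma item {Ω : Type*} [MeasurableSpace Ω] (μ : Measure Ω) [IsProbabilityMeasure μ]
    {ε : ℝ} (hε0 : 0 < ε) (hε1 : ε < 1) {m : ℕ} (hm : (12 / ε) ^ (12 / ε) ≤ (m : ℝ))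
    (X : Fin m → Ω → ℝ) (hmeas : ∀ i, Measurable (X i)) (hnn : ∀ i ω, 0 ≤ X i ω)
    (hind : iIndepFun X μ)
    {D : Measure ℝ} [IsProbabilityMeasure D] (hD : ∀ i, μ.map (X i) = D)
    {f : ℝ → ℝ} (hpdf : D = MeasureTheory.volume.withDensity fun x => ENNReal.ofReal (f x))
    (hmono : MonotoneOn (fun x => f x / Gf D x) {x | 0 < Gf D x})
    (M : Ω → ℝ) (hM : ∀ ω, IsGreatest (Set.range fun i => X i ω) (M ω))
    (hMint : Integrable M μ) :
    ∃ r : ℝ, 0 ≤ r ∧ (1 - ε) * ∫ ω, M ω ∂μ ≤ (μ {ω | r ≤ M ω}).toReal * r := by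
  obtain ⟨hm2, hlogm, hexp⟩ := numeric_facts hε0 hε1 hm
  set δ := ε/3 with hδ
  have hδ0 : 0 < δ := by rw [hδ]; linarith
  have hδ1 : δ < 1 := by rw [hδ]; linarith
  have hm0 : (0:ℝ) < m := by positivity
  have hm1 : (1:ℝ) < m := by exact_mod_cast Nat.lt_of_lt_of_le Nat.one_lt_two hm2
  have hlogm0 : 0 < Real.log m := Real.log_pos hm1
  have i₀ : Fin m := ⟨0, by omega⟩
  have h0 : D (Set.Iio 0) = 0 := by
    rw [← hD i₀, Measure.map_apply (hmeas i₀) measurableSet_Iio]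
    have : X i₀ ⁻¹' (Set.Iio 0) = ∅ := by
      ext ω; simp only [Set.mem_preimage, Set.mem_Iio, Set.mem_empty_iff_false, iff_false, not_lt]
      exact hnn i₀ ω
    rw [this, measure_empty]
  obtain ⟨t, ht0, hGt, htail, hC2⟩ := dist_core hpdf h0 hmono hm2 hδ0 hδ1
  set r := (1 - δ) * t with hr
  have hr0 : 0 ≤ r := by nlinarith
  refine ⟨r, hr0, ?_⟩
  have hMnn : ∀ ω, 0 ≤ M ω := fun ω => le_trans (hnn i₀ ω) ((hM ω).2 ⟨i₀, rfl⟩)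
  -- upper bound on expectation
  set c := Real.log m / t with hc
  have hc0 : 0 < c := by rw [hc]; positivity
  set g := fun x : ℝ => (μ {a | x < M a}).toReal with hg
  have hganti : Antitone g := by
    intro x y hxy
    exact ENNReal.toReal_mono (measure_ne_top μ _)
      (measure_mono (fun a ha => lt_of_le_of_lt hxy ha))
  have hgmeas : Measurable g := hganti.measurable
  have hg1 : ∀ x, g x ≤ 1 := fun x => by
    rw [hg]
    exact ENNReal.toReal_le_of_le_ofReal zero_le_one (by simpa using prob_le_one)
  have hgnn : ∀ x, 0 ≤ g x := fun x => ENNReal.toReal_nonneg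
  have hunion : ∀ x : ℝ, {a | x < M a} = ⋃ i, X i ⁻¹' Set.Ioi x := by
    intro x
    ext ω
    simp only [Set.mem_setOf_eq, Set.mem_iUnion, Set.mem_preimage, Set.mem_Ioi]
    constructor
    · intro hx
      obtain ⟨i, hi⟩ := (hM ω).1
      refine ⟨i, ?_⟩
      rw [show X i ω = M ω from hi]
      exact hx
    · rintro ⟨i, hi⟩
      exact lt_of_lt_of_le hi ((hM ω).2 ⟨i, rfl⟩)
  have hg_le : ∀ x, g x ≤ m * Gf D x := by
    intro x
    rw [hg]
    have h1 : μ {a | x < M a} ≤ m * D (Set.Ioi x) := by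
      rw [hunion x]
      calc μ (⋃ i, X i ⁻¹' Set.Ioi x) ≤ ∑ i : Fin m, μ (X i ⁻¹' Set.Ioi x) :=
            measure_iUnion_fintype_le _ _
      _ = ∑ _i : Fin m, D (Set.Ioi x) := by
            apply Finset.sum_congr rfl
            intro i _
            rw [← hD i, Measure.map_apply (hmeas i) measurableSet_Ioi]
      _ = m * D (Set.Ioi x) := by
            rw [Finset.sum_const, Finset.card_univ, Fintype.card_fin]
            simp [nsmul_eq_mul]
    have h2 := ENNReal.toReal_mono (by
        apply ENNReal.mul_ne_top (by simp) (measure_ne_top D _)) h1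
    refine h2.trans ?_
    rw [ENNReal.toReal_mul]
    simp [Gf]
  have htail' : ∀ x ∈ Set.Ioi t, g x ≤ Real.exp (c * t) * Real.exp (-(c * x)) := by
    intro x hx
    have h1 := (hg_le x).trans (mul_le_mul_of_nonneg_left (htail x (le_of_lt hx)) hm0.le)
    have h2 : (m:ℝ) * ((1/m) * Real.exp (-(c) * (x - t))) = Real.exp (c*t) * Real.exp (-(c*x)) := by
      rw [← Real.exp_add, ← mul_assoc, mul_one_div_cancel (ne_of_gt hm0), one_mul]
      congr 1
      ring
    rw [← h2]
    exact h1
  have hint1 : IntegrableOn g (Set.Ioc 0 t) := by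
    apply Measure.integrableOn_of_bounded (M := 1)
      (by rw [Real.volume_Ioc]; exact ENNReal.ofReal_ne_top) hgmeas.aestronglyMeasurable
    filter_upwards with x
    rw [Real.norm_eq_abs, abs_of_nonneg (hgnn x)]
    exact hg1 x
  have hintexp : IntegrableOn (fun x => Real.exp (c*t) * Real.exp (-(c * x))) (Set.Ioi t) := by
    have h := (exp_neg_integrableOn_Ioi t hc0).const_mul (Real.exp (c*t))
    simpa [neg_mul, IntegrableOn] using h
  have hint2 : IntegrableOn g (Set.Ioi t) := by
    apply Integrable.mono' hintexp (hgmeas.aestronglyMeasurable.restrict)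
    filter_upwards [ae_restrict_mem measurableSet_Ioi] with x hx
    rw [Real.norm_eq_abs, abs_of_nonneg (hgnn x)]
    exact htail' x hx
  have hsplit : ∫ x in Set.Ioi 0, g x = (∫ x in Set.Ioc 0 t, g x) + ∫ x in Set.Ioi t, g x := by
    rw [← Set.Ioc_union_Ioi_eq_Ioi ht0.le]
    apply setIntegral_union
    · apply Set.disjoint_left.2
      intro a ha hb
      exact absurd ha.2 (not_le.2 hb)
    · exact measurableSet_Ioi
    · exact hint1
    · exact hint2
  have hpart1 : ∫ x in Set.Ioc 0 t, g x ≤ t := by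
    have h1 : ∫ x in Set.Ioc 0 t, g x ≤ ∫ _x in Set.Ioc 0 t, (1:ℝ) := by
      apply setIntegral_mono_on hint1 (integrableOn_const (by simp) (by simp))
        measurableSet_Ioc
      intro x _
      exact hg1 x
    rw [setIntegral_const, smul_eq_mul, mul_one, Real.volume_real_Ioc, sub_zero,
      max_eq_left ht0.le] at h1
    exact h1
  have hpart2 : ∫ x in Set.Ioi t, g x ≤ t / Real.log m := by
    have h1 : ∫ x in Set.Ioi t, g x ≤ ∫ x in Set.Ioi t, Real.exp (c*t) * Real.exp (-(c * x)) :=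
      setIntegral_mono_on hint2 hintexp measurableSet_Ioi htail'
    have h2 : ∫ x in Set.Ioi t, Real.exp (c*t) * Real.exp (-(c * x)) = 1 / c := by
      rw [integral_const_mul]
      have h3 : ∫ x in Set.Ioi t, Real.exp (-(c * x)) = c⁻¹ * Real.exp (-(c * t)) := by
        have h4 := integral_comp_mul_left_Ioi (fun u => Real.exp (-u)) t hc0
        simp only [smul_eq_mul] at h4
        rw [h4, integral_exp_neg_Ioi]
      rw [h3]
      rw [show Real.exp (c*t) * (c⁻¹ * Real.exp (-(c*t))) =
        c⁻¹ * (Real.exp (c*t) * Real.exp (-(c*t))) by ring, ← Real.exp_add]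
      rw [show c*t + -(c*t) = 0 by ring, Real.exp_zero, mul_one, one_div]
    rw [h2] at h1
    rw [hc] at h1
    rw [one_div_div] at h1
    exact h1
  have hEM : ∫ ω, M ω ∂μ ≤ (1 + δ) * t := by
    have hlayer : ∫ ω, M ω ∂μ = ∫ x in Set.Ioi 0, g x :=
      hMint.integral_eq_integral_meas_lt (Filter.Eventually.of_forall hMnn)
    rw [hlayer, hsplit]
    have : t / Real.log m ≤ δ * t := by
      rw [div_le_iff₀ hlogm0]
      have h1 : 1/δ ≤ Real.log m := by
        rw [hδ, one_div_div]
        have h2 : (3:ℝ)/ε ≤ 12/ε := by gcongr <;> norm_num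
        linarith
      rw [div_le_iff₀ hδ0] at h1
      nlinarith
    linarith [hpart1, hpart2]
  -- revenue lower bound
  have hIio : ∀ i, μ (X i ⁻¹' Set.Iio r) = D (Set.Iio r) := fun i => by
    rw [← hD i, Measure.map_apply (hmeas i) measurableSet_Iio]
  have hInter : {ω | M ω < r} = ⋂ i, X i ⁻¹' Set.Iio r := by
    ext ω
    simp only [Set.mem_setOf_eq, Set.mem_iInter, Set.mem_preimage, Set.mem_Iio]
    constructor
    · intro h i
      exact lt_of_le_of_lt ((hM ω).2 ⟨i, rfl⟩) h
    · intro h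
      obtain ⟨i, hi⟩ := (hM ω).1
      rw [← show X i ω = M ω from hi]
      exact h i
  have hprod : μ {ω | M ω < r} = (D (Set.Iio r)) ^ m := by
    rw [hInter, hind.meas_iInter (fun i => ⟨Set.Iio r, measurableSet_Iio, rfl⟩)]
    simp only [hIio]
    rw [Finset.prod_const, Finset.card_univ, Fintype.card_fin]
  have hcompl : {ω | r ≤ M ω} = {ω | M ω < r}ᶜ := by
    ext ω; simp [not_lt]
  have hmeasset : MeasurableSet {ω | M ω < r} := by
    rw [hInter]
    exact MeasurableSet.iInter (fun i => (hmeas i) measurableSet_Iio)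
  have hμr : μ {ω | r ≤ M ω} = 1 - (D (Set.Iio r)) ^ m := by
    rw [hcompl, prob_compl_eq_one_sub hmeasset, hprod]
  set p := D (Set.Iio r) with hp
  have hp1 : p ≤ 1 := prob_le_one
  have hpm1 : p ^ m ≤ 1 := pow_le_one' hp1 m
  have hptoReal : p.toReal = 1 - Gf D r := by
    rw [hp, D_Iio_eq hpdf, Ff_eq]
  have hμrt : (μ {ω | r ≤ M ω}).toReal = 1 - p.toReal ^ m := by
    rw [hμr, ENNReal.toReal_sub_of_le hpm1 (by simp), ENNReal.toReal_one, ENNReal.toReal_pow]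
  have hple : p.toReal ≤ 1 - (m:ℝ) ^ (δ - 1 : ℝ) := by
    rw [hptoReal]
    linarith [hC2]
  have hr1 : (m:ℝ) ^ (δ - 1 : ℝ) ≤ 1 :=
    Real.rpow_le_one_of_one_le_of_nonpos hm1.le (by linarith)
  have hrp0 : 0 < (m:ℝ) ^ (δ - 1 : ℝ) := Real.rpow_pos_of_pos hm0 _
  have hppow : p.toReal ^ m ≤ δ := by
    calc p.toReal ^ m ≤ (1 - (m:ℝ) ^ (δ - 1 : ℝ)) ^ m :=
          pow_le_pow_left₀ ENNReal.toReal_nonneg hple m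
    _ ≤ Real.exp (-(m:ℝ) ^ (δ - 1 : ℝ)) ^ m := by
          apply pow_le_pow_left₀ (by linarith)
          linarith [Real.add_one_le_exp (-(m:ℝ) ^ (δ - 1 : ℝ))]
    _ = Real.exp ((m:ℝ) * -((m:ℝ) ^ (δ - 1 : ℝ))) := (Real.exp_nat_mul _ m).symm
    _ = Real.exp (-(m:ℝ) ^ (δ : ℝ)) := by
          congr 1
          rw [show (m:ℝ) * -((m:ℝ) ^ (δ - 1 : ℝ)) = -((m:ℝ) ^ (1:ℝ) * (m:ℝ) ^ (δ - 1 : ℝ)) by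
            rw [Real.rpow_one]; ring, ← Real.rpow_add hm0]
          norm_num
    _ ≤ δ := hexp
  have hrev : 1 - δ ≤ (μ {ω | r ≤ M ω}).toReal := by
    rw [hμrt]
    linarith
  calc (1 - ε) * ∫ ω, M ω ∂μ ≤ (1 - ε) * ((1 + δ) * t) :=
        mul_le_mul_of_nonneg_left hEM (by linarith)
  _ ≤ (1 - δ) * r := by
        rw [hr, hδ]
        nlinarith [mul_nonneg (sq_nonneg ε) ht0.le]
  _ ≤ (μ {ω | r ≤ M ω}).toReal * r := mul_le_mul_of_nonneg_right hrev hr0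


/-- **Per-item reserve prices for many i.i.d. bidders from the same population.** With
`m ≥ (12/ε)^{12/ε}` bidders whose values `v i j` for each item `j` are i.i.d. with a
common MHR distribution `D j` (pdf `f j`, cdf `F j`), there exist reserve prices
`r j ≥ 0` such that `∑_j Pr[max_i v i j ≥ r j] · r j ≥ (1-ε) ∑_j E[max_i v i j]`. -/
theorem iid_population_reserve_prices {Ω : Type*} [MeasurableSpace Ω] (μ : Measure Ω)
    [IsProbabilityMeasure μ] (ε : ℝ) (hε0 : 0 < ε) (hε1 : ε < 1)
    (m : ℕ) (hm : (12 / ε) ^ (12 / ε) ≤ (m : ℝ)) (n : ℕ) (hn : 1 ≤ n)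
    (v : Fin m → Fin n → Ω → ℝ)
    (hmeas : ∀ i j, Measurable (v i j))
    (hnonneg : ∀ i j ω, 0 ≤ v i j ω)
    (hindep : ∀ j, iIndepFun (fun i => v i j) μ)
    (D : Fin n → Measure ℝ) (hD : ∀ i j, μ.map (v i j) = D j)
    (f F : Fin n → ℝ → ℝ)
    (hpdf : ∀ j, D j = MeasureTheory.volume.withDensity fun x => ENNReal.ofReal (f j x))
    (hcdf : ∀ j x, F j x = (D j (Set.Iic x)).toReal)
    (hMHR : ∀ j, MonotoneOn (fun x => f j x / (1 - F j x)) {x | F j x < 1})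
    (M : Fin n → Ω → ℝ)
    (hM : ∀ j ω, IsGreatest (Set.range fun i => v i j ω) (M j ω))
    (hMint : ∀ j, Integrable (M j) μ) :
    ∃ r : Fin n → ℝ, (∀ j, 0 ≤ r j) ∧
      (1 - ε) * (∑ j : Fin n, ∫ ω, M j ω ∂μ) ≤
        ∑ j : Fin n, (μ {ω | r j ≤ M j ω}).toReal * r j := by
  obtain ⟨hm2, -, -⟩ := numeric_facts hε0 hε1 hm
  have i₀ : Fin m := ⟨0, by omega⟩
  have hPD : ∀ j, IsProbabilityMeasure (D j) := fun j =>
    hD i₀ j ▸ Measure.isProbabilityMeasure_map (hmeas i₀ j).aemeasurable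
  have H : ∀ j, ∃ r : ℝ, 0 ≤ r ∧
      (1 - ε) * ∫ ω, M j ω ∂μ ≤ (μ {ω | r ≤ M j ω}).toReal * r := by
    intro j
    haveI := hPD j
    have hmono : MonotoneOn (fun x => f j x / Gf (D j) x) {x | 0 < Gf (D j) x} := by
      have hFG : ∀ x, F j x = 1 - Gf (D j) x := fun x => by rw [hcdf j x, Ff_eq]
      have hset : ∀ x : ℝ, 0 < Gf (D j) x ↔ F j x < 1 := fun x => by
        rw [hFG x]; constructor <;> intro <;> linarith
      intro a ha b hb hab
      have h := hMHR j ((hset a).1 ha) ((hset b).1 hb) hab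
      simp only [hFG a, hFG b, sub_sub_cancel] at h
      exact h
    exact item μ hε0 hε1 hm (fun i => v i j) (fun i => hmeas i j) (fun i ω => hnonneg i j ω)
      (hindep j) (fun i => hD i j) (hpdf j) hmono (M j) (hM j) (hMint j)
  choose r hr0 hrineq using H
  refine ⟨r, hr0, ?_⟩
  rw [Finset.mul_sum]
  exact Finset.sum_le_sum fun j _ => hrineq j
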